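/- The antisymmetrizer 𝔄_k ∈ A ⊗ A satisfies 𝔄_k·𝔄_k = 𝔄_k·(1 ⊗ t), where t = ∑_{w ∈ S_k} T_w·T_{w⁻¹}. -/

import Mathlib

/-- The number of inversions of a permutation `w` of `{0, …, k−1}`:
`ℓ(w) = #{(m,n) : m < n, w(m) > w(n)}`.  This equals the Coxeter length of `w`,
i.e. the minimal number of adjacent transpositions needed to express `w`. -/
def invNum {k : ℕ} (w : Equiv.Perm (Fin k)) : ℕ :=
  (Finset.univ.filter fun p : Fin k × Fin k => p.1 < p.2 ∧ w p.2 < w p.1).card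

/-- `s` is one of the adjacent transpositions `s_i = (i, i+1)`. -/
def IsAdjSwap {k : ℕ} (s : Equiv.Perm (Fin k)) : Prop :=
  ∃ (i : ℕ) (h : i + 1 < k), s = Equiv.swap ⟨i, Nat.lt_of_succ_lt h⟩ ⟨i + 1, h⟩

namespace AuxAnti

variable {k : ℕ}

lemma perm_eq_one_of_strictMono {w : Equiv.Perm (Fin k)} (hw : StrictMono w) : w = 1 := by
  let e : Fin k ≃o Fin k := { toEquiv := w, map_rel_iff' := hw.le_iff_le }
  have he : e = OrderIso.refl (Fin k) := Subsingleton.elim _ _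
  ext x
  have := congrArg (fun f : Fin k ≃o Fin k => ((f x : Fin k) : ℕ)) he
  simpa [e] using this

lemma invNum_one : invNum (1 : Equiv.Perm (Fin k)) = 0 := by
  rw [invNum, Finset.card_eq_zero, Finset.filter_eq_empty_iff]
  rintro ⟨a, b⟩ _ ⟨h1, h2⟩
  exact absurd h1 (by simpa using le_of_lt h2)

lemma eq_one_of_invNum {w : Equiv.Perm (Fin k)} (h : invNum w = 0) : w = 1 := by
  rw [invNum, Finset.card_eq_zero, Finset.filter_eq_empty_iff] at h
  apply perm_eq_one_of_strictMono
  intro a b hab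
  have h2' := h (Finset.mem_univ (a, b))
  simp only [not_and] at h2'
  have h2 := h2' hab
  rcases lt_trichotomy (w a) (w b) with h' | h' | h'
  · exact h'
  · exact absurd (w.injective h') (ne_of_lt hab)
  · exact absurd h' h2

lemma invNum_inv (w : Equiv.Perm (Fin k)) : invNum w⁻¹ = invNum w := by
  rw [invNum, invNum]
  apply Finset.card_nbij' (i := fun p => (w⁻¹ p.2, w⁻¹ p.1)) (j := fun p => (w p.2, w p.1))
  · intro p hm; obtain ⟨a, b⟩ := p
    simp only [Finset.mem_coe, Finset.mem_filter, Finset.mem_univ, true_and] at hm ⊢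
    simpa using ⟨hm.2, hm.1⟩
  · intro p hm; obtain ⟨a, b⟩ := p
    simp only [Finset.mem_coe, Finset.mem_filter, Finset.mem_univ, true_and] at hm ⊢
    simpa using ⟨hm.2, hm.1⟩
  · rintro ⟨a, b⟩ _; simp
  · rintro ⟨a, b⟩ _; simp


section Swap

variable {i : ℕ} (h : i + 1 < k)

/-- order lemma for the adjacent swap -/
lemma swap_lt_iff (x y : Fin k) (hxy : x < y) :
    Equiv.swap (⟨i, Nat.lt_of_succ_lt h⟩ : Fin k) ⟨i + 1, h⟩ y
      < Equiv.swap (⟨i, Nat.lt_of_succ_lt h⟩ : Fin k) ⟨i + 1, h⟩ x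
      ↔ (x = ⟨i, Nat.lt_of_succ_lt h⟩ ∧ y = ⟨i + 1, h⟩) := by
  simp only [Equiv.swap_apply_def]
  split_ifs <;>
    · simp only [Fin.lt_def, Fin.ext_iff] at *
      omega

lemma invNum_swap_mul_of_lt (v : Equiv.Perm (Fin k))
    (hv : v⁻¹ ⟨i, Nat.lt_of_succ_lt h⟩ < v⁻¹ ⟨i + 1, h⟩) :
    invNum (Equiv.swap (⟨i, Nat.lt_of_succ_lt h⟩ : Fin k) ⟨i + 1, h⟩ * v)
      = invNum v + 1 := by
  set a0 : Fin k := ⟨i, Nat.lt_of_succ_lt h⟩ with ha0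
  set a1 : Fin k := ⟨i + 1, h⟩ with ha1
  set s := Equiv.swap a0 a1 with hs
  set a := v⁻¹ a0 with ha
  set b := v⁻¹ a1 with hb
  have hva : v a = a0 := v.apply_symm_apply a0
  have hvb : v b = a1 := v.apply_symm_apply a1
  have h01 : a0 < a1 := by simp [ha0, ha1, Fin.lt_def]
  have hQ : (Finset.univ.filter fun p : Fin k × Fin k => p.1 < p.2 ∧ (s * v) p.2 < (s * v) p.1)
      = insert (a, b) (Finset.univ.filter fun p : Fin k × Fin k => p.1 < p.2 ∧ v p.2 < v p.1) := by
    ext p; obtain ⟨m, n⟩ := p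
    simp only [Finset.mem_insert, Finset.mem_filter, Finset.mem_univ, true_and,
      Prod.mk.injEq]
    simp only [Equiv.Perm.mul_apply]
    constructor
    · rintro ⟨h12, hsv⟩
      rcases lt_trichotomy (v m) (v n) with h' | h' | h'
      · left
        have hx := (swap_lt_iff h (v m) (v n) h').1 hsv
        have hm : m = a := v.injective (by rw [hva]; exact hx.1)
        have hn : n = b := v.injective (by rw [hvb]; exact hx.2)
        exact ⟨hm, hn⟩
      · exact absurd (v.injective h') (ne_of_lt h12)
      · exact Or.inr ⟨h12, h'⟩
    · rintro (⟨rfl, rfl⟩ | ⟨h12, h'⟩)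
      · refine ⟨hv, ?_⟩
        rw [hva, hvb, hs, Equiv.swap_apply_left, Equiv.swap_apply_right]
        exact h01
      · refine ⟨h12, ?_⟩
        have hne : s (v n) ≠ s (v m) := fun e => (ne_of_lt h') (s.injective e)
        have hnot : ¬ (s (v m) < s (v n)) := by
          intro hlt
          have hx := (swap_lt_iff h (v n) (v m) h').1 hlt
          have hn : n = a := v.injective (by rw [hva]; exact hx.1)
          have hm : m = b := v.injective (by rw [hvb]; exact hx.2)
          subst hn; subst hm
          exact absurd hv (not_lt_of_gt h12)
        exact lt_of_le_of_ne (le_of_not_gt hnot) hne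
  have hnotmem : (a, b) ∉ (Finset.univ.filter
      fun p : Fin k × Fin k => p.1 < p.2 ∧ v p.2 < v p.1) := by
    simp only [Finset.mem_filter, Finset.mem_univ, true_and, not_and]
    intro _
    rw [hva, hvb]
    exact not_lt_of_gt h01
  rw [invNum, invNum, hQ, Finset.card_insert_of_notMem hnotmem]

lemma invNum_swap_mul_of_gt (v : Equiv.Perm (Fin k))
    (hv : v⁻¹ ⟨i + 1, h⟩ < v⁻¹ ⟨i, Nat.lt_of_succ_lt h⟩) :
    invNum v
      = invNum (Equiv.swap (⟨i, Nat.lt_of_succ_lt h⟩ : Fin k) ⟨i + 1, h⟩ * v) + 1 := by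
  set a0 : Fin k := ⟨i, Nat.lt_of_succ_lt h⟩
  set a1 : Fin k := ⟨i + 1, h⟩
  set s := Equiv.swap a0 a1 with hs
  have hss : s * s = 1 := Equiv.swap_mul_self a0 a1
  have hv' : (s * v)⁻¹ a0 < (s * v)⁻¹ a1 := by
    have hsinv : s⁻¹ = s := by rw [hs, Equiv.swap_inv]
    simp only [mul_inv_rev, hsinv, Equiv.Perm.mul_apply, hs, Equiv.swap_inv,
      Equiv.swap_apply_left, Equiv.swap_apply_right]
    exact hv
  have := invNum_swap_mul_of_lt h (s * v) hv'
  rwa [← mul_assoc, hss, one_mul] at this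

end Swap

lemma adjSwap_sq {s : Equiv.Perm (Fin k)} (hs : IsAdjSwap s) : s * s = 1 := by
  obtain ⟨i, h, rfl⟩ := hs; exact Equiv.swap_mul_self _ _

lemma adjSwap_inv {s : Equiv.Perm (Fin k)} (hs : IsAdjSwap s) : s⁻¹ = s := by
  obtain ⟨i, h, rfl⟩ := hs; exact Equiv.swap_inv _ _

lemma adjSwap_ne_one {s : Equiv.Perm (Fin k)} (hs : IsAdjSwap s) : s ≠ 1 := by
  obtain ⟨i, h, rfl⟩ := hs
  intro e
  have := congrArg (fun f : Equiv.Perm (Fin k) => (f ⟨i, Nat.lt_of_succ_lt h⟩ : Fin k).val) e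
  simp [Equiv.swap_apply_left] at this

lemma adjSwap_invNum_pos {s : Equiv.Perm (Fin k)} (hs : IsAdjSwap s) : 0 < invNum s :=
  Nat.pos_of_ne_zero fun h0 => adjSwap_ne_one hs (eq_one_of_invNum h0)

/-- left multiplication by an adjacent swap changes the length by exactly one -/
lemma invNum_step {s : Equiv.Perm (Fin k)} (hs : IsAdjSwap s) (v : Equiv.Perm (Fin k)) :
    invNum (s * v) = invNum v + 1 ∨ invNum v = invNum (s * v) + 1 := by
  obtain ⟨i, h, rfl⟩ := hs
  rcases lt_trichotomy (v⁻¹ ⟨i, Nat.lt_of_succ_lt h⟩) (v⁻¹ ⟨i + 1, h⟩) with h' | h' | h'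
  · exact Or.inl (invNum_swap_mul_of_lt h v h')
  · exact absurd (v⁻¹.injective h') (by simp [Fin.ext_iff])
  · exact Or.inr (invNum_swap_mul_of_gt h v h')

/-- right multiplication by an adjacent swap changes the length by exactly one -/
lemma invNum_stepR {s : Equiv.Perm (Fin k)} (hs : IsAdjSwap s) (v : Equiv.Perm (Fin k)) :
    invNum (v * s) = invNum v + 1 ∨ invNum v = invNum (v * s) + 1 := by
  have hsinv : s⁻¹ = s := by obtain ⟨i, h, rfl⟩ := hs; exact Equiv.swap_inv _ _
  have this1 := invNum_step hs v⁻¹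
  have h2 : invNum (s * v⁻¹) = invNum (v * s) := by
    rw [← invNum_inv (s * v⁻¹), mul_inv_rev, inv_inv, hsinv]
  rwa [h2, invNum_inv] at this1

/-- existence of a left descent -/
lemma exists_descent {w : Equiv.Perm (Fin k)} (hw : w ≠ 1) :
    ∃ s : Equiv.Perm (Fin k), IsAdjSwap s ∧ invNum (s * w) < invNum w := by
  by_cases hex : ∃ i, ∃ (h : i + 1 < k),
      w⁻¹ ⟨i + 1, h⟩ < w⁻¹ ⟨i, Nat.lt_of_succ_lt h⟩
  · obtain ⟨i, h, h'⟩ := hex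
    refine ⟨Equiv.swap ⟨i, Nat.lt_of_succ_lt h⟩ ⟨i + 1, h⟩, ⟨i, h, rfl⟩, ?_⟩
    have := invNum_swap_mul_of_gt h w h'
    omega
  · exfalso
    push_neg at hex
    have hmono : ∀ i (h : i + 1 < k),
        w⁻¹ ⟨i, Nat.lt_of_succ_lt h⟩ < w⁻¹ ⟨i + 1, h⟩ := by
      intro i h
      refine lt_of_le_of_ne (hex i h) ?_
      intro e
      exact absurd (w⁻¹.injective e) (by simp [Fin.ext_iff])
    have hsm : StrictMono ⇑w⁻¹ := by
      cases k with
      | zero =>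
        exact absurd (by ext x; exact x.elim0) hw
      | succ n =>
        rw [Fin.strictMono_iff_lt_succ]
        intro i
        have := hmono i.val (Nat.succ_lt_succ i.isLt)
        exact this
    have : w⁻¹ = 1 := perm_eq_one_of_strictMono hsm
    exact hw (by rw [← inv_inv w, this, inv_one])

section Algebra

variable {q : ℂ} {A : Type} [Ring A] [Algebra ℂ A] {T : Module.Basis (Equiv.Perm (Fin k)) ℂ A}

local notation "Perm'" => Equiv.Perm (Fin k)

lemma quad (hTgt : ∀ s w : Perm', IsAdjSwap s → invNum (s * w) < invNum w →
      T s * T w = (q - q⁻¹) • T w + T (s * w))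
    (hT1 : T 1 = 1) {s : Perm'} (hs : IsAdjSwap s) :
    T s * T s = (q - q⁻¹) • T s + 1 := by
  have h0 : invNum (s * s) < invNum s := by
    rw [adjSwap_sq hs, invNum_one]; exact adjSwap_invNum_pos hs
  have := hTgt s s hs h0
  rwa [adjSwap_sq hs, hT1] at this

lemma inverse_adj (hTgt : ∀ s w : Perm', IsAdjSwap s → invNum (s * w) < invNum w →
      T s * T w = (q - q⁻¹) • T w + T (s * w))
    (hT1 : T 1 = 1) (hUnit : ∀ w : Perm', IsUnit (T w)) {s : Perm'} (hs : IsAdjSwap s) :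
    Ring.inverse (T s) = T s - (q - q⁻¹) • 1 := by
  have hmul : T s * (T s - (q - q⁻¹) • 1) = 1 := by
    rw [mul_sub, quad hTgt hT1 hs, mul_smul_comm, mul_one]
    abel
  calc Ring.inverse (T s) = Ring.inverse (T s) * (T s * (T s - (q - q⁻¹) • 1)) := by
        rw [hmul, mul_one]
    _ = (Ring.inverse (T s) * T s) * (T s - (q - q⁻¹) • 1) := by rw [mul_assoc]
    _ = T s - (q - q⁻¹) • 1 := by rw [Ring.inverse_mul_cancel _ (hUnit s), one_mul]

lemma TmulR (hTlt : ∀ s w : Perm', IsAdjSwap s → invNum w < invNum (s * w) →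
      T s * T w = T (s * w))
    (hT1 : T 1 = 1) :
    ∀ (n : ℕ) (v s : Perm'), IsAdjSwap s → invNum v = n →
      invNum v < invNum (v * s) → T v * T s = T (v * s) := by
  intro n
  induction n using Nat.strong_induction_on with
  | _ n ih =>
    intro v s hs hn hlt
    by_cases hv1 : v = 1
    · subst hv1; rw [hT1, one_mul, one_mul]
    · obtain ⟨s', hs', hdesc⟩ := exists_descent hv1
      have hvv : s' * (s' * v) = v := by rw [← mul_assoc, adjSwap_sq hs', one_mul]
      have hstep := invNum_step hs' v
      have hlen : invNum v = invNum (s' * v) + 1 := by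
        rcases hstep with h1 | h1 <;> omega
      have hTv : T s' * T (s' * v) = T v := by
        rw [hTlt s' (s' * v) hs' (by rw [hvv]; omega), hvv]
      have hstepR := invNum_stepR hs (s' * v)
      have hstepR2 := invNum_stepR hs v
      have hstep2 := invNum_step hs' (s' * v * s)
      have hvs : s' * (s' * v * s) = v * s := by rw [← mul_assoc, hvv]
      rw [hvs] at hstep2
      have hlt' : invNum (s' * v) < invNum (s' * v * s) := by omega
      have ih1 : T (s' * v) * T s = T (s' * v * s) :=
        ih (invNum (s' * v)) (by omega) (s' * v) s hs rfl hlt'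
      have hfin : invNum (s' * v * s) < invNum (s' * (s' * v * s)) := by rw [hvs]; omega
      rw [← hTv, mul_assoc, ih1, hTlt s' (s' * v * s) hs' hfin, hvs]

lemma TmulR_gt (hTlt : ∀ s w : Perm', IsAdjSwap s → invNum w < invNum (s * w) →
      T s * T w = T (s * w))
    (hTgt : ∀ s w : Perm', IsAdjSwap s → invNum (s * w) < invNum w →
      T s * T w = (q - q⁻¹) • T w + T (s * w))
    (hT1 : T 1 = 1) {v s : Perm'} (hs : IsAdjSwap s)
    (hlt : invNum (v * s) < invNum v) :
    T v * T s = (q - q⁻¹) • T v + T (v * s) := by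
  set u := v * s with hu
  have huv : u * s = v := by rw [hu, mul_assoc, adjSwap_sq hs, mul_one]
  have h1 : T u * T s = T v := by
    rw [TmulR hTlt hT1 (invNum u) u s hs rfl (by rw [huv]; exact hlt), huv]
  calc T v * T s = T u * (T s * T s) := by rw [← h1, mul_assoc]
    _ = T u * ((q - q⁻¹) • T s + 1) := by rw [quad hTgt hT1 hs]
    _ = (q - q⁻¹) • (T u * T s) + T u := by rw [mul_add, mul_one, mul_smul_comm]
    _ = (q - q⁻¹) • T v + T (v * s) := by rw [h1, hu]

lemma inverse_mul_adj (hTlt : ∀ s w : Perm', IsAdjSwap s → invNum w < invNum (s * w) →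
      T s * T w = T (s * w))
    (hUnit : ∀ w : Perm', IsUnit (T w)) {s v : Perm'} (hs : IsAdjSwap s)
    (hlt : invNum v < invNum (s * v)) :
    Ring.inverse (T (s * v)) = Ring.inverse (T v) * Ring.inverse (T s) := by
  have hmul : T s * T v = T (s * v) := hTlt s v hs hlt
  have h1 : T (s * v) * (Ring.inverse (T v) * Ring.inverse (T s)) = T s * Ring.inverse (T s) := by
    rw [← hmul, mul_assoc, ← mul_assoc (T v), Ring.mul_inverse_cancel _ (hUnit v), one_mul]
  rw [Ring.mul_inverse_cancel _ (hUnit s)] at h1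
  calc Ring.inverse (T (s * v))
      = Ring.inverse (T (s * v)) * (T (s * v) * (Ring.inverse (T v) * Ring.inverse (T s))) := by
        rw [h1, mul_one]
    _ = (Ring.inverse (T (s * v)) * T (s * v)) * (Ring.inverse (T v) * Ring.inverse (T s)) := by
        rw [mul_assoc]
    _ = Ring.inverse (T v) * Ring.inverse (T s) := by
        rw [Ring.inverse_mul_cancel _ (hUnit (s * v)), one_mul]

lemma inverse_adj_sq (hTgt : ∀ s w : Perm', IsAdjSwap s → invNum (s * w) < invNum w →
      T s * T w = (q - q⁻¹) • T w + T (s * w))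
    (hT1 : T 1 = 1) (hUnit : ∀ w : Perm', IsUnit (T w)) {s : Perm'} (hs : IsAdjSwap s) :
    Ring.inverse (T s) * Ring.inverse (T s) = 1 - (q - q⁻¹) • Ring.inverse (T s) := by
  rw [inverse_adj hTgt hT1 hUnit hs]
  simp only [sub_mul, mul_sub, smul_mul_assoc, mul_smul_comm, mul_one, one_mul,
    smul_smul, smul_sub]
  rw [quad hTgt hT1 hs]
  abel

open TensorProduct in
lemma key_pair (hTlt : ∀ s w : Perm', IsAdjSwap s → invNum w < invNum (s * w) →
      T s * T w = T (s * w))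
    (hTgt : ∀ s w : Perm', IsAdjSwap s → invNum (s * w) < invNum w →
      T s * T w = (q - q⁻¹) • T w + T (s * w))
    (hT1 : T 1 = 1) (hUnit : ∀ w : Perm', IsUnit (T w)) {s : Perm'} (hs : IsAdjSwap s)
    {v : Perm'} (hlt : invNum v < invNum (s * v)) :
    ((-1 : ℂ)) ^ invNum v • (Ring.inverse (T v) ⊗ₜ[ℂ] (T v⁻¹ * T s))
      + ((-1 : ℂ)) ^ invNum v • ((Ring.inverse (T v) * Ring.inverse (T s)) ⊗ₜ[ℂ] T v⁻¹)
      + (((-1 : ℂ)) ^ invNum (s * v) • (Ring.inverse (T (s * v)) ⊗ₜ[ℂ] (T (s * v)⁻¹ * T s))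
      + ((-1 : ℂ)) ^ invNum (s * v) •
          ((Ring.inverse (T (s * v)) * Ring.inverse (T s)) ⊗ₜ[ℂ] T (s * v)⁻¹)) = 0 := by
  have huinv : (s * v)⁻¹ = v⁻¹ * s := by rw [mul_inv_rev, adjSwap_inv hs]
  have hlen : invNum (s * v) = invNum v + 1 := by
    have := invNum_step hs v; omega
  have hi : T v⁻¹ * T s = T (s * v)⁻¹ := by
    have hgoal : invNum v⁻¹ < invNum (v⁻¹ * s) := by
      rw [invNum_inv, ← huinv, invNum_inv]; omega
    rw [huinv, TmulR hTlt hT1 (invNum v⁻¹) v⁻¹ s hs rfl hgoal]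
  have hii : Ring.inverse (T v) * Ring.inverse (T s) = Ring.inverse (T (s * v)) :=
    (inverse_mul_adj hTlt hUnit hs hlt).symm
  have huis : (s * v)⁻¹ * s = v⁻¹ := by rw [huinv, mul_assoc, adjSwap_sq hs, mul_one]
  have hiii : T (s * v)⁻¹ * T s = (q - q⁻¹) • T (s * v)⁻¹ + T v⁻¹ := by
    have hgoal : invNum ((s * v)⁻¹ * s) < invNum (s * v)⁻¹ := by
      rw [huis, invNum_inv, invNum_inv]; omega
    have := TmulR_gt hTlt hTgt hT1 hs hgoal
    rwa [huis] at this
  have hiv : Ring.inverse (T (s * v)) * Ring.inverse (T s)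
      = Ring.inverse (T v) - (q - q⁻¹) • Ring.inverse (T (s * v)) := by
    rw [← hii, mul_assoc, inverse_adj_sq hTgt hT1 hUnit hs, mul_sub, mul_one,
      mul_smul_comm, hii]
  rw [hi, hii, hiii, hiv, hlen, pow_succ]
  simp only [tmul_add, tmul_smul, sub_tmul, smul_tmul', smul_smul, smul_sub, mul_neg_one,
    smul_add, neg_smul]
  module

open TensorProduct in
lemma key (hTlt : ∀ s w : Perm', IsAdjSwap s → invNum w < invNum (s * w) →
      T s * T w = T (s * w))
    (hTgt : ∀ s w : Perm', IsAdjSwap s → invNum (s * w) < invNum w →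
      T s * T w = (q - q⁻¹) • T w + T (s * w))
    (hT1 : T 1 = 1) (hUnit : ∀ w : Perm', IsUnit (T w)) {s : Perm'} (hs : IsAdjSwap s) :
    (∑ v : Perm', ((-1 : ℂ)) ^ invNum v • (Ring.inverse (T v) ⊗ₜ[ℂ] T v⁻¹))
        * ((1 : A) ⊗ₜ[ℂ] T s)
      + (∑ v : Perm', ((-1 : ℂ)) ^ invNum v • (Ring.inverse (T v) ⊗ₜ[ℂ] T v⁻¹))
        * (Ring.inverse (T s) ⊗ₜ[ℂ] (1 : A)) = 0 := by
  rw [Finset.sum_mul, Finset.sum_mul, ← Finset.sum_add_distrib]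
  have hterm : ∀ v : Perm',
      ((-1 : ℂ)) ^ invNum v • (Ring.inverse (T v) ⊗ₜ[ℂ] T v⁻¹) * ((1 : A) ⊗ₜ[ℂ] T s)
        + ((-1 : ℂ)) ^ invNum v • (Ring.inverse (T v) ⊗ₜ[ℂ] T v⁻¹)
            * (Ring.inverse (T s) ⊗ₜ[ℂ] (1 : A))
      = ((-1 : ℂ)) ^ invNum v • (Ring.inverse (T v) ⊗ₜ[ℂ] (T v⁻¹ * T s))
        + ((-1 : ℂ)) ^ invNum v
            • ((Ring.inverse (T v) * Ring.inverse (T s)) ⊗ₜ[ℂ] T v⁻¹) := by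
    intro v
    simp only [smul_mul_assoc, Algebra.TensorProduct.tmul_mul_tmul, mul_one, one_mul]
  simp only [hterm]
  apply Finset.sum_ninvolution (g := fun v => s * v)
  · intro v
    rcases invNum_step hs v with h1 | h1
    · exact key_pair hTlt hTgt hT1 hUnit hs (by omega)
    · have h2 := key_pair hTlt hTgt hT1 hUnit hs (v := s * v)
        (by rw [← mul_assoc, adjSwap_sq hs, one_mul]; omega)
      rw [← mul_assoc, adjSwap_sq hs, one_mul] at h2
      rw [add_comm] at h2
      exact h2
  · intro v _ e
    exact adjSwap_ne_one hs (mul_right_cancel (b := v) (by rw [one_mul]; exact e))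
  · intro v; exact Finset.mem_univ _
  · intro v; rw [← mul_assoc, adjSwap_sq hs, one_mul]

open TensorProduct in
lemma main_rel (hTlt : ∀ s w : Perm', IsAdjSwap s → invNum w < invNum (s * w) →
      T s * T w = T (s * w))
    (hTgt : ∀ s w : Perm', IsAdjSwap s → invNum (s * w) < invNum w →
      T s * T w = (q - q⁻¹) • T w + T (s * w))
    (hT1 : T 1 = 1) (hUnit : ∀ w : Perm', IsUnit (T w)) :
    ∀ (n : ℕ) (v : Perm'), invNum v = n →
    (∑ u : Perm', ((-1 : ℂ)) ^ invNum u • (Ring.inverse (T u) ⊗ₜ[ℂ] T u⁻¹))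
        * ((1 : A) ⊗ₜ[ℂ] T v)
      = ((-1 : ℂ)) ^ invNum v •
        ((∑ u : Perm', ((-1 : ℂ)) ^ invNum u • (Ring.inverse (T u) ⊗ₜ[ℂ] T u⁻¹))
          * (Ring.inverse (T v) ⊗ₜ[ℂ] (1 : A))) := by
  intro n
  induction n using Nat.strong_induction_on with
  | _ n ih =>
    intro v hn
    by_cases hv1 : v = 1
    · subst hv1
      rw [hT1, Ring.inverse_one, invNum_one, pow_zero, one_smul]
    · obtain ⟨s, hs, hdesc⟩ := exists_descent hv1
      have hvv : s * (s * v) = v := by rw [← mul_assoc, adjSwap_sq hs, one_mul]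
      have hlen : invNum v = invNum (s * v) + 1 := by
        have := invNum_step hs v; omega
      have hTv : T s * T (s * v) = T v := by
        rw [hTlt s (s * v) hs (by rw [hvv]; omega), hvv]
      have hIv : Ring.inverse (T (s * v)) * Ring.inverse (T s) = Ring.inverse (T v) := by
        have := inverse_mul_adj hTlt hUnit hs (v := s * v) (by rw [hvv]; omega)
        rw [hvv] at this
        exact this.symm
      set AA := ∑ u : Perm', ((-1 : ℂ)) ^ invNum u • (Ring.inverse (T u) ⊗ₜ[ℂ] T u⁻¹)
        with hAA
      have hK : AA * ((1 : A) ⊗ₜ[ℂ] T s)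
          = -(AA * (Ring.inverse (T s) ⊗ₜ[ℂ] (1 : A))) :=
        eq_neg_of_add_eq_zero_left (key hTlt hTgt hT1 hUnit hs)
      have hIH := ih (invNum (s * v)) (by omega) (s * v) rfl
      calc AA * ((1 : A) ⊗ₜ[ℂ] T v)
          = AA * (((1 : A) ⊗ₜ[ℂ] T s) * ((1 : A) ⊗ₜ[ℂ] T (s * v))) := by
            rw [Algebra.TensorProduct.tmul_mul_tmul, one_mul, hTv]
        _ = (AA * ((1 : A) ⊗ₜ[ℂ] T s)) * ((1 : A) ⊗ₜ[ℂ] T (s * v)) := by rw [mul_assoc]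
        _ = -((AA * ((1 : A) ⊗ₜ[ℂ] T (s * v))) * (Ring.inverse (T s) ⊗ₜ[ℂ] (1 : A))) := by
            rw [hK, neg_mul, mul_assoc, mul_assoc,
              Algebra.TensorProduct.tmul_mul_tmul, Algebra.TensorProduct.tmul_mul_tmul,
              one_mul, mul_one, one_mul, mul_one]
        _ = -((((-1 : ℂ)) ^ invNum (s * v)
              • (AA * (Ring.inverse (T (s * v)) ⊗ₜ[ℂ] (1 : A))))
              * (Ring.inverse (T s) ⊗ₜ[ℂ] (1 : A))) := by rw [hIH]
        _ = ((-1 : ℂ)) ^ invNum v • (AA * (Ring.inverse (T v) ⊗ₜ[ℂ] (1 : A))) := by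
            rw [smul_mul_assoc, mul_assoc, Algebra.TensorProduct.tmul_mul_tmul, one_mul,
              hIv, hlen, pow_succ, mul_neg_one, neg_smul]

end Algebra

end AuxAnti

open TensorProduct in
/-- The antisymmetrizer `𝔄_k = ∑_{w} (−1)^{ℓ(w)} T_w⁻¹ ⊗ T_{w⁻¹} ∈ A ⊗ A` satisfies
`𝔄_k · 𝔄_k = 𝔄_k · (1 ⊗ t)` where `t = ∑_{w ∈ S_k} T_w · T_{w⁻¹}`. -/
theorem heckeAlgebra_antisymmetrizer_sq
    (k : ℕ) (hk : 1 ≤ k) (q : ℂ) (hq : q ≠ 0)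
    (A : Type) [Ring A] [Algebra ℂ A]
    (T : Module.Basis (Equiv.Perm (Fin k)) ℂ A)
    (hT1 : T 1 = 1)
    (hTlt : ∀ s w : Equiv.Perm (Fin k), IsAdjSwap s → invNum w < invNum (s * w) →
      T s * T w = T (s * w))
    (hTgt : ∀ s w : Equiv.Perm (Fin k), IsAdjSwap s → invNum (s * w) < invNum w →
      T s * T w = (q - q⁻¹) • T w + T (s * w))
    (hUnit : ∀ w : Equiv.Perm (Fin k), IsUnit (T w)) :
    (∑ v : Equiv.Perm (Fin k),
        ((-1 : ℂ)) ^ invNum v • (Ring.inverse (T v) ⊗ₜ[ℂ] T v⁻¹)) *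
      (∑ v : Equiv.Perm (Fin k),
        ((-1 : ℂ)) ^ invNum v • (Ring.inverse (T v) ⊗ₜ[ℂ] T v⁻¹)) =
    (∑ v : Equiv.Perm (Fin k),
        ((-1 : ℂ)) ^ invNum v • (Ring.inverse (T v) ⊗ₜ[ℂ] T v⁻¹)) *
      ((1 : A) ⊗ₜ[ℂ] (∑ w : Equiv.Perm (Fin k), T w * T w⁻¹)) := by
  set AA := ∑ v : Equiv.Perm (Fin k),
      ((-1 : ℂ)) ^ invNum v • (Ring.inverse (T v) ⊗ₜ[ℂ] T v⁻¹) with hAA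
  rw [show (1 : A) ⊗ₜ[ℂ] (∑ w : Equiv.Perm (Fin k), T w * T w⁻¹)
      = ∑ w : Equiv.Perm (Fin k), (1 : A) ⊗ₜ[ℂ] (T w * T w⁻¹) from tmul_sum _ _ _,
    Finset.mul_sum, hAA, Finset.mul_sum, ← hAA]
  refine Finset.sum_congr rfl fun v _ => ?_
  have hsq : ((-1 : ℂ)) ^ invNum v * ((-1 : ℂ)) ^ invNum v = 1 := by
    rw [← mul_pow]; norm_num
  have hM := AuxAnti.main_rel hTlt hTgt hT1 hUnit (invNum v) v rfl
  rw [← hAA] at hM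
  have hM' : AA * (Ring.inverse (T v) ⊗ₜ[ℂ] (1 : A))
      = ((-1 : ℂ)) ^ invNum v • (AA * ((1 : A) ⊗ₜ[ℂ] T v)) := by
    rw [hM, smul_smul, hsq, one_smul]
  have h1 : Ring.inverse (T v) ⊗ₜ[ℂ] T v⁻¹
      = (Ring.inverse (T v) ⊗ₜ[ℂ] (1 : A)) * ((1 : A) ⊗ₜ[ℂ] T v⁻¹) := by
    rw [Algebra.TensorProduct.tmul_mul_tmul, mul_one, one_mul]
  rw [mul_smul_comm, h1, ← mul_assoc, hM', smul_mul_assoc, smul_smul, hsq, one_smul,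
    mul_assoc, Algebra.TensorProduct.tmul_mul_tmul, one_mul]
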